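/- In a graph G with source s and sink t in which every vertex and every edge lies on some s-t path, for any induced subgraph G' containing at least one edge, there exist vertices u, v in G' such that there is a path P_su from s to u and a path P_vt from v to t with P_su and P_vt vertex-disjoint, P_su intersecting G' only in u, and P_vt intersecting G' only in v. -/

import Mathlib

open SimpleGraph

noncomputable def trackSeq {V : Type} (T : Set V) (l : List V) : List V :=
  l.filter (fun v => @decide (v ∈ T) (Classical.propDecidable _))

/-- `T` is a tracking set for `s`-`t` paths in `G`: distinct `s`-`t` paths have
distinct sequences of `T`-vertices along them. -/
def IsTrackingSet {V : Type} (G : SimpleGraph V) (s t : V) (T : Set V) : Prop :=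
  ∀ p q : G.Walk s t, p.IsPath → q.IsPath →
    trackSeq T p.support = trackSeq T q.support → p = q

/-- Every vertex and every edge of `G` lies on some `s`-`t` path. -/
def Reduced {V : Type} (G : SimpleGraph V) (s t : V) : Prop :=
  (∀ v : V, ∃ p : G.Walk s t, p.IsPath ∧ v ∈ p.support) ∧
  (∀ e ∈ G.edgeSet, ∃ p : G.Walk s t, p.IsPath ∧ e ∈ p.edges)

open Walk

lemma takeUntil_nil' {V : Type} [DecidableEq V] {G : SimpleGraph V} {x : V}
    (h : x ∈ (Walk.nil : G.Walk x x).support) :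
    (Walk.nil : G.Walk x x).takeUntil x h = Walk.nil := rfl

lemma takeUntil_cons_self {V : Type} [DecidableEq V] {G : SimpleGraph V} {a b c : V}
    (h : G.Adj a b) (w : G.Walk b c) (hm : a ∈ (Walk.cons h w).support) :
    (Walk.cons h w).takeUntil a hm = Walk.nil := by
  simp [Walk.takeUntil]

lemma takeUntil_cons_ne {V : Type} [DecidableEq V] {G : SimpleGraph V} {a b c u : V}
    (h : G.Adj a b) (w : G.Walk b c) (hau : a ≠ u) (hm : u ∈ (Walk.cons h w).support)
    (hu : u ∈ w.support) :
    (Walk.cons h w).takeUntil u hm = Walk.cons h (w.takeUntil u hu) := by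
  simp [Walk.takeUntil, hau]

lemma exists_first {V : Type} [DecidableEq V] {G : SimpleGraph V} (S : Set V) :
    ∀ {x y : V} (w : G.Walk x y), (∃ z ∈ w.support, z ∈ S) →
      ∃ u, u ∈ S ∧ ∃ hu : u ∈ w.support,
        ∀ z ∈ (w.takeUntil u hu).support, z ∈ S → z = u := by
  intro x y w
  induction w with
  | nil =>
    rename_i x'
    rintro ⟨z, hz, hzS⟩
    obtain rfl : z = x' := by simpa [mem_support_nil_iff] using hz
    refine ⟨z, hzS, start_mem_support _, ?_⟩
    intro z' hz' _
    rw [takeUntil_nil'] at hz'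
    simpa using hz'
  | cons h w ih =>
    rename_i a b c
    rintro ⟨z, hz, hzS⟩
    by_cases haS : a ∈ S
    · refine ⟨a, haS, start_mem_support _, ?_⟩
      intro z' hz' _
      rw [takeUntil_cons_self] at hz'
      simpa using hz'
    · have hz' : z ∈ w.support := by
        rcases (by simpa using hz : z = a ∨ z ∈ w.support) with rfl | h'
        · exact absurd hzS haS
        · exact h'
      obtain ⟨u, huS, hu, hall⟩ := ih ⟨z, hz', hzS⟩
      have hau : a ≠ u := fun e => haS (e ▸ huS)
      refine ⟨u, huS, by rw [support_cons]; exact List.mem_cons_of_mem _ hu, ?_⟩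
      intro z' hz'2 hz'S
      rw [takeUntil_cons_ne h w hau _ hu] at hz'2
      rcases (by simpa using hz'2 : z' = a ∨ z' ∈ (w.takeUntil u hu).support) with rfl | h'
      · exact absurd hz'S haS
      · exact hall _ h' hz'S

theorem stmt0 {V : Type} [Fintype V] (G : SimpleGraph V) (s t : V)
    (hred : Reduced G s t) (S : Set V)
    (hedge : ∃ a ∈ S, ∃ b ∈ S, G.Adj a b) :
    ∃ u ∈ S, ∃ v ∈ S, ∃ p : G.Walk s u, ∃ q : G.Walk v t,
      p.IsPath ∧ q.IsPath ∧
      (∀ x, x ∈ p.support → x ∉ q.support) ∧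
      {x | x ∈ S ∧ x ∈ p.support} = {u} ∧
      {x | x ∈ S ∧ x ∈ q.support} = {v} := by
  classical
  obtain ⟨a, haS, b, hbS, hab⟩ := hedge
  obtain ⟨w, hw, he⟩ := hred.2 s(a, b) hab
  have ha : a ∈ w.support := w.fst_mem_support_of_mem_edges he
  have hb : b ∈ w.support := w.snd_mem_support_of_mem_edges he
  obtain ⟨u, huS, hu, hallP⟩ := exists_first S w ⟨a, ha, haS⟩
  set P := w.takeUntil u hu with hP
  set r := w.dropUntil u hu with hr
  have hPpath : P.IsPath := hw.takeUntil hu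
  have hrpath : r.IsPath := hw.dropUntil hu
  have hsplit : w.support = P.support ++ r.support.tail := by
    conv_lhs => rw [← take_spec w hu]
    rw [support_append]
  obtain ⟨b', hb'S, hb'w, hb'ne⟩ : ∃ b', b' ∈ S ∧ b' ∈ w.support ∧ b' ≠ u := by
    by_cases hau : a = u
    · exact ⟨b, hbS, hb, fun e => hab.ne (hau ▸ e ▸ rfl)⟩
    · exact ⟨a, haS, ha, hau⟩
  have hb'notP : b' ∉ P.support := fun h => hb'ne (hallP b' h hb'S)
  have hb'tail : b' ∈ r.support.tail := by
    have := hsplit ▸ hb'w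
    rcases List.mem_append.mp this with h1 | h2
    · exact absurd h1 hb'notP
    · exact h2
  have hb'r : b' ∈ r.support := List.mem_of_mem_tail hb'tail
  set rr := r.reverse with hrr
  have hrrpath : rr.IsPath := hrpath.reverse
  have hb'rr : b' ∈ rr.support := by
    rw [hrr, support_reverse, List.mem_reverse]; exact hb'r
  obtain ⟨v, hvS, hv, hallQ⟩ := exists_first S rr ⟨b', hb'rr, hb'S⟩
  have hvu : v ≠ u := by
    rintro rfl
    have hnil : rr.dropUntil v hv = Walk.nil :=
      isPath_iff_eq_nil.mp (hrrpath.dropUntil hv)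
    have hsplit2 : rr.support = (rr.takeUntil v hv).support := by
      conv_lhs => rw [← take_spec rr hv]
      rw [support_append, hnil]
      simp
    exact hb'ne (hallQ b' (hsplit2 ▸ hb'rr) hb'S)
  set Q := (rr.takeUntil v hv).reverse with hQ
  have hQpath : Q.IsPath := (hrrpath.takeUntil hv).reverse
  have hQmem : ∀ x, x ∈ Q.support ↔ x ∈ (rr.takeUntil v hv).support := by
    intro x; rw [hQ, support_reverse, List.mem_reverse]
  have hallQ' : ∀ z ∈ Q.support, z ∈ S → z = v := fun z hz =>
    hallQ z ((hQmem z).mp hz)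
  have hQsub : ∀ x ∈ Q.support, x ∈ r.support := by
    intro x hx
    have : x ∈ rr.support := support_takeUntil_subset rr hv ((hQmem x).mp hx)
    rwa [hrr, support_reverse, List.mem_reverse] at this
  have hdisj : ∀ x, x ∈ P.support → x ∉ Q.support := by
    intro x hxP hxQ
    have hxr : x ∈ r.support := hQsub x hxQ
    have hxu : x ≠ u := by
      rintro rfl
      exact hvu (hallQ' _ hxQ huS).symm
    have hxtail : x ∈ r.support.tail := by
      have := support_eq_cons r ▸ hxr
      rcases List.mem_cons.mp this with h1 | h2
      · exact absurd h1 hxu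
      · exact h2
    have hnd : (P.support ++ r.support.tail).Nodup := hsplit ▸ hw.support_nodup
    exact (List.disjoint_of_nodup_append hnd) hxP hxtail
  refine ⟨u, huS, v, hvS, P, Q, hPpath, hQpath, hdisj, ?_, ?_⟩
  · ext x
    simp only [Set.mem_setOf_eq, Set.mem_singleton_iff]
    constructor
    · rintro ⟨hxS, hxP⟩; exact hallP x hxP hxS
    · rintro rfl; exact ⟨huS, end_mem_support P⟩
  · ext x
    simp only [Set.mem_setOf_eq, Set.mem_singleton_iff]
    constructor
    · rintro ⟨hxS, hxQ⟩; exact hallQ' x hxQ hxS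
    · rintro rfl; exact ⟨hvS, start_mem_support Q⟩
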